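/- The language GT = {w ∈ {0,1}* : #_0(w) > #_1(w)} is not in REG/n. -/

import Mathlib

/-- A language `P` over `σ` is in `REG/n` if there are a finite advice
alphabet `Γ`, an advice function `h : ℕ → Γ*` with `|h n| = n`, and a regular
language `L` over the track alphabet `σ × Γ` such that `x ∈ P` iff the track
string `⟨x, h(|x|)⟩` belongs to `L`. -/
def InREGn {σ : Type} (P : Language σ) : Prop :=
  ∃ (Γ : Type) (_ : Fintype Γ) (h : ℕ → List Γ),
    (∀ n, (h n).length = n) ∧
    ∃ L : Language (σ × Γ), L.IsRegular ∧
      ∀ x : List σ, x ∈ P ↔ x.zip (h x.length) ∈ L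

/-- The language `GT = {w ∈ {0,1}* : #₀(w) > #₁(w)}` (binary strings with
more `0`s than `1`s, `0` encoded as `false` and `1` as `true`)
is not in `REG/n`. -/
theorem gt_not_in_REGn :
    ¬ InREGn { x : List Bool | x.count true < x.count false } := by
  rintro ⟨Γ, _, h, hlen, L, ⟨Q, _, M, rfl⟩, hmem⟩
  set m := Fintype.card Q with hm
  set adv := h (2 * m) with hadv
  have hadvlen : adv.length = 2 * m := hlen _
  set adv1 := adv.take m with ha1
  set adv2 := adv.drop m with ha2
  have h1 : adv1.length = m := by
    simp only [ha1, List.length_take, hadvlen]; omega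
  have h2 : adv2.length = m := by
    simp only [ha2, List.length_drop, hadvlen]; omega
  have hsplit : adv = adv1 ++ adv2 := (List.take_append_drop m adv).symm
  -- prefix strings
  let p : Fin (m + 1) → List Bool :=
    fun i => List.replicate (i : ℕ) false ++ List.replicate (m - (i : ℕ)) true
  have hplen : ∀ i, (p i).length = m := by
    intro i
    have := i.isLt
    simp only [p, List.length_append, List.length_replicate]
    omega
  set f : Fin (m + 1) → Q := fun i => M.evalFrom M.start ((p i).zip adv1) with hf
  have key : ∀ i i' : Fin (m + 1), (i : ℕ) < (i' : ℕ) → f i = f i' → False := by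
    intro i i' hlt heq
    have hi' : (i' : ℕ) ≤ m := Nat.lt_succ_iff.mp i'.isLt
    set s : List Bool :=
      List.replicate (m - (i : ℕ)) false ++ List.replicate (i : ℕ) true with hs
    have hslen : s.length = m := by
      simp only [hs, List.length_append, List.length_replicate]; omega
    -- membership statements for the two words
    have hx := hmem (p i ++ s)
    have hy := hmem (p i' ++ s)
    have hxlen : (p i ++ s).length = 2 * m := by
      simp [List.length_append, hplen, hslen]; omega
    have hylen : (p i' ++ s).length = 2 * m := by
      simp [List.length_append, hplen, hslen]; omega
    rw [hxlen] at hx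
    rw [hylen] at hy
    have hzip : ∀ j : Fin (m + 1),
        (p j ++ s).zip adv = (p j).zip adv1 ++ s.zip adv2 := by
      intro j
      rw [hsplit, List.zip_append]
      rw [hplen j, h1]
    have heval : ∀ j : Fin (m + 1),
        M.eval ((p j ++ s).zip adv) = M.evalFrom (f j) (s.zip adv2) := by
      intro j
      rw [hzip j]
      exact M.evalFrom_of_append _ _ _
    have hiff : ((p i ++ s) ∈ {x : List Bool | x.count true < x.count false}) ↔
        ((p i' ++ s) ∈ {x : List Bool | x.count true < x.count false}) := by
      refine hx.trans (Iff.trans ?_ hy.symm)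
      rw [← hadv, DFA.mem_accepts, DFA.mem_accepts, heval i, heval i', heq]
    have hcx : ¬ ((p i ++ s).count true < (p i ++ s).count false) := by
      have hi : (i : ℕ) ≤ m := by omega
      simp only [p, hs, List.count_append, List.count_replicate]
      simp
      omega
    have hcy : (p i' ++ s).count true < (p i' ++ s).count false := by
      simp only [p, hs, List.count_append, List.count_replicate]
      simp
      omega
    exact hcx (hiff.mpr hcy)
  obtain ⟨i, i', hne, heq⟩ :=
    Fintype.exists_ne_map_eq_of_card_lt f (by simp [hm])
  rcases lt_or_gt_of_ne (fun hc => hne (Fin.ext hc) : (i : ℕ) ≠ (i' : ℕ)) with hlt | hlt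
  · exact key i i' hlt heq
  · exact key i' i hlt heq.symm
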